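/- Let δ ≥ 0 and let Θ be a δ-separability-preserving superchannel. For every bipartite quantum channel N, the generalized log-robustness satisfies LR(Θ[N]) ≤ LR(N) + log₂(1 + δ). -/

import Mathlib

open scoped BigOperators Kronecker ComplexOrder
open Matrix Filter

noncomputable section

namespace DynEnt

/-- A (not necessarily linear) map between matrix spaces. -/
abbrev MatMap (ι₀ ι₁ : Type) : Type := Matrix ι₀ ι₀ ℂ → Matrix ι₁ ι₁ ℂ

/-- The map `L ⊗ id_ρ`, acting trivially on a reference system indexed by `ρ`. -/
def tensorIdT {ι₀ ι₁ ρ : Type} (L : MatMap ι₀ ι₁)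
    (X : Matrix (ι₀ × ρ) (ι₀ × ρ) ℂ) : Matrix (ι₁ × ρ) (ι₁ × ρ) ℂ :=
  Matrix.of fun p q => L (Matrix.of fun i j => X (i, p.2) (j, q.2)) p.1 q.1

def IsLinearFun {ι₀ ι₁ : Type} (L : MatMap ι₀ ι₁) : Prop :=
  ∀ (c : ℂ) (X Y : Matrix ι₀ ι₀ ℂ), L (c • X + Y) = c • L X + L Y

def IsCompletelyPositive {ι₀ ι₁ : Type} [Fintype ι₀] [Fintype ι₁] (L : MatMap ι₀ ι₁) : Prop :=
  ∀ (r : ℕ) (X : Matrix (ι₀ × Fin r) (ι₀ × Fin r) ℂ), X.PosSemidef → (tensorIdT L X).PosSemidef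

def IsTracePreserving {ι₀ ι₁ : Type} [Fintype ι₀] [Fintype ι₁] (L : MatMap ι₀ ι₁) : Prop :=
  ∀ X, (L X).trace = X.trace

/-- A quantum channel: a linear, completely positive, trace-preserving map. -/
def IsChannel {ι₀ ι₁ : Type} [Fintype ι₀] [Fintype ι₁] (L : MatMap ι₀ ι₁) : Prop :=
  IsLinearFun L ∧ IsCompletelyPositive L ∧ IsTracePreserving L

/-- Tensor product of two matrix maps, defined on matrix units and extended linearly. -/
def tensorMap {α₀ α₁ β₀ β₁ : Type} [Fintype α₀] [DecidableEq α₀] [Fintype β₀] [DecidableEq β₀]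
    (LA : MatMap α₀ α₁) (LB : MatMap β₀ β₁) : MatMap (α₀ × β₀) (α₁ × β₁) :=
  fun X => ∑ i : α₀, ∑ j : α₀, ∑ k : β₀, ∑ l : β₀,
    X (i, k) (j, l) • (LA (Matrix.single i j 1) ⊗ₖ LB (Matrix.single k l 1))

/-- Separable bipartite channel (cut `α : β`). -/
def IsSepChannel {α₀ β₀ α₁ β₁ : Type}
    [Fintype α₀] [DecidableEq α₀] [Fintype β₀] [DecidableEq β₀] [Fintype α₁] [Fintype β₁]
    (N : MatMap (α₀ × β₀) (α₁ × β₁)) : Prop :=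
  IsChannel N ∧ ∃ (n : ℕ) (LA : Fin n → MatMap α₀ α₁) (LB : Fin n → MatMap β₀ β₁),
    (∀ k, IsLinearFun (LA k) ∧ IsCompletelyPositive (LA k) ∧
          IsLinearFun (LB k) ∧ IsCompletelyPositive (LB k)) ∧
    ∀ X, N X = ∑ k, tensorMap (LA k) (LB k) X

/-- The old Mathlib `Matrix.PosSemidef.sqrt`, removed from Mathlib. -/
def psdSqrt {ι : Type} [Fintype ι] [DecidableEq ι] {A : Matrix ι ι ℂ} (hA : A.PosSemidef) :
    Matrix ι ι ℂ :=
  (hA.1.eigenvectorUnitary : Matrix ι ι ℂ) *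
    Matrix.diagonal ((↑) ∘ (Real.sqrt ∘ hA.1.eigenvalues)) *
    (star hA.1.eigenvectorUnitary : Matrix ι ι ℂ)

/-- Trace norm `‖X‖₁ = tr √(X† X)`. -/
def traceNorm {ι : Type} [Fintype ι] [DecidableEq ι] (X : Matrix ι ι ℂ) : ℝ :=
  (psdSqrt (Matrix.posSemidef_conjTranspose_mul_self X)).trace.re

/-- Density matrix. -/
def IsState {ι : Type} [Fintype ι] (ρ : Matrix ι ι ℂ) : Prop :=
  ρ.PosSemidef ∧ ρ.trace = 1

/-- Pure state (rank-one density matrix). -/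
def IsPureState {ι : Type} [Fintype ι] (ρ : Matrix ι ι ℂ) : Prop :=
  ∃ v : ι → ℂ, (∑ i, Complex.normSq (v i)) = 1 ∧
    ρ = Matrix.vecMulVec v (fun i => star (v i))

/-- Diamond norm. -/
def diamondNorm {ι₀ ι₁ : Type} [Fintype ι₀] [Fintype ι₁] [DecidableEq ι₁]
    (L : MatMap ι₀ ι₁) : ℝ :=
  sSup { t : ℝ | ∃ (r : ℕ) (ρ : Matrix (ι₀ × Fin r) (ι₀ × Fin r) ℂ),
    ρ.PosSemidef ∧ ρ.trace = 1 ∧ t = traceNorm (tensorIdT L ρ) }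

section Bipartite

variable {α₀ β₀ α₁ β₁ α₀' β₀' α₁' β₁' : Type}
variable [Fintype α₀] [DecidableEq α₀] [Fintype β₀] [DecidableEq β₀]
variable [Fintype α₁] [DecidableEq α₁] [Fintype β₁] [DecidableEq β₁]
variable [Fintype α₀'] [DecidableEq α₀'] [Fintype β₀'] [DecidableEq β₀']
variable [Fintype α₁'] [DecidableEq α₁'] [Fintype β₁'] [DecidableEq β₁']

/-- Standard robustness w.r.t. separable channels. -/
def stdRobustness (N : MatMap (α₀ × β₀) (α₁ × β₁)) : ℝ :=
  sInf { s : ℝ | 0 ≤ s ∧ ∃ M : MatMap (α₀ × β₀) (α₁ × β₁), IsSepChannel M ∧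
    IsSepChannel (fun X => (1 + s)⁻¹ • (N X + s • M X)) }

/-- Generalized robustness w.r.t. separable channels. -/
def genRobustness (N : MatMap (α₀ × β₀) (α₁ × β₁)) : ℝ :=
  sInf { s : ℝ | 0 ≤ s ∧ ∃ M : MatMap (α₀ × β₀) (α₁ × β₁), IsChannel M ∧
    IsSepChannel (fun X => (1 + s)⁻¹ • (N X + s • M X)) }

/-- Standard log-robustness. -/
def LRs (N : MatMap (α₀ × β₀) (α₁ × β₁)) : ℝ := Real.logb 2 (1 + stdRobustness N)

/-- Generalized log-robustness. -/
def LRgen (N : MatMap (α₀ × β₀) (α₁ × β₁)) : ℝ := Real.logb 2 (1 + genRobustness N)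

/-- Smooth standard log-robustness. -/
def smoothLRs (ε : ℝ) (N : MatMap (α₀ × β₀) (α₁ × β₁)) : ℝ :=
  sInf { t : ℝ | ∃ N' : MatMap (α₀ × β₀) (α₁ × β₁), IsChannel N' ∧
    (1/2) * diamondNorm (fun X => N' X - N X) ≤ ε ∧ t = LRs N' }

/-- Smooth generalized log-robustness. -/
def smoothLRgen (ε : ℝ) (N : MatMap (α₀ × β₀) (α₁ × β₁)) : ℝ :=
  sInf { t : ℝ | ∃ N' : MatMap (α₀ × β₀) (α₁ × β₁), IsChannel N' ∧
    (1/2) * diamondNorm (fun X => N' X - N X) ≤ ε ∧ t = LRgen N' }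

end Bipartite

/-- A superchannel, given by pre- and post-processing channels with a memory system `Fin e`. -/
structure Superchannel (α₀ β₀ α₁ β₁ α₀' β₀' α₁' β₁' : Type)
    [Fintype α₀] [Fintype β₀] [Fintype α₁] [Fintype β₁]
    [Fintype α₀'] [Fintype β₀'] [Fintype α₁'] [Fintype β₁'] : Type where
  e : ℕ
  pre : MatMap (α₀' × β₀') ((α₀ × β₀) × Fin e)
  post : MatMap ((α₁ × β₁) × Fin e) (α₁' × β₁')
  pre_channel : IsChannel pre
  post_channel : IsChannel post

section Super

variable {α₀ β₀ α₁ β₁ α₀' β₀' α₁' β₁' : Type}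
variable [Fintype α₀] [DecidableEq α₀] [Fintype β₀] [DecidableEq β₀]
variable [Fintype α₁] [DecidableEq α₁] [Fintype β₁] [DecidableEq β₁]
variable [Fintype α₀'] [DecidableEq α₀'] [Fintype β₀'] [DecidableEq β₀']
variable [Fintype α₁'] [DecidableEq α₁'] [Fintype β₁'] [DecidableEq β₁']

/-- Action of a superchannel on a channel: `Θ[E] = post ∘ (E ⊗ id) ∘ pre`. -/
def Superchannel.apply (Θ : Superchannel α₀ β₀ α₁ β₁ α₀' β₀' α₁' β₁')
    (E : MatMap (α₀ × β₀) (α₁ × β₁)) : MatMap (α₀' × β₀') (α₁' × β₁') :=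
  fun X => Θ.post (tensorIdT E (Θ.pre X))

/-- Separability-preserving superchannel. -/
def IsSEPPSC (Θ : Superchannel α₀ β₀ α₁ β₁ α₀' β₀' α₁' β₁') : Prop :=
  ∀ M : MatMap (α₀ × β₀) (α₁ × β₁), IsSepChannel M → IsSepChannel (Θ.apply M)

/-- δ-separability-preserving superchannel. -/
def IsDeltaSEPPSC (δ : ℝ) (Θ : Superchannel α₀ β₀ α₁ β₁ α₀' β₀' α₁' β₁') : Prop :=
  ∀ M : MatMap (α₀ × β₀) (α₁ × β₁), IsSepChannel M → genRobustness (Θ.apply M) ≤ δ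

end Super

/-- The swap unitary `F = Σ |ij⟩⟨ji|` on `ℂ^K ⊗ ℂ^K`. -/
def swapMatrix (K : ℕ) : Matrix (Fin K × Fin K) (Fin K × Fin K) ℂ :=
  Matrix.of fun p q => if p.1 = q.2 ∧ p.2 = q.1 then 1 else 0

/-- The `K`-swap channel `X ↦ F X F†`. -/
def swapChannel (K : ℕ) : MatMap (Fin K × Fin K) (Fin K × Fin K) :=
  fun X => swapMatrix K * X * (swapMatrix K)ᴴ

/-- The density matrix of the `K`-maximally entangled state inside `ℂ^{dA} ⊗ ℂ^{dB}`. -/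
def maxEntangled (dA dB K : ℕ) : Matrix (Fin dA × Fin dB) (Fin dA × Fin dB) ℂ :=
  Matrix.of fun p q =>
    if (p.1 : ℕ) = (p.2 : ℕ) ∧ (q.1 : ℕ) = (q.2 : ℕ) ∧ (p.1 : ℕ) < K ∧ (q.1 : ℕ) < K
    then (1 / K : ℂ) else 0

/-- Separable bipartite state. -/
def IsSepState {ιA ιB : Type} [Fintype ιA] [Fintype ιB]
    (σ : Matrix (ιA × ιB) (ιA × ιB) ℂ) : Prop :=
  ∃ (n : ℕ) (p : Fin n → ℝ) (φ : Fin n → ιA → ℂ) (ψ : Fin n → ιB → ℂ),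
    (∀ a, 0 ≤ p a) ∧ (∑ a, p a) = 1 ∧
    (∀ a, (∑ i, Complex.normSq (φ a i)) = 1) ∧
    (∀ a, (∑ i, Complex.normSq (ψ a i)) = 1) ∧
    σ = ∑ a, (p a : ℂ) •
      (Matrix.vecMulVec (φ a) (fun i => star (φ a i)) ⊗ₖ
       Matrix.vecMulVec (ψ a) (fun i => star (ψ a i)))

/-- Input state `Φ^{a₀}_{A₀Ã₀} ⊗ Φ^{b₀}_{B₀B̃₀}` for the Choi matrix, with index
grouping `(A₀ × B₀) × (Ã₀ × B̃₀)`. -/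
def choiInput (a₀ b₀ : ℕ) :
    Matrix ((Fin a₀ × Fin b₀) × (Fin a₀ × Fin b₀)) ((Fin a₀ × Fin b₀) × (Fin a₀ × Fin b₀)) ℂ :=
  Matrix.of fun p q =>
    maxEntangled a₀ a₀ a₀ (p.1.1, p.2.1) (q.1.1, q.2.1) *
    maxEntangled b₀ b₀ b₀ (p.1.2, p.2.2) (q.1.2, q.2.2)

/-- Normalized Choi matrix of a bipartite channel. -/
def choiBi {a₀ b₀ : ℕ} {ι₁ : Type} (E : MatMap (Fin a₀ × Fin b₀) ι₁) :
    Matrix (ι₁ × (Fin a₀ × Fin b₀)) (ι₁ × (Fin a₀ × Fin b₀)) ℂ :=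
  tensorIdT E (choiInput a₀ b₀)

/-- Normalized Choi matrix of a single-system channel. -/
def choi1 {d : ℕ} {ι₁ : Type} (N : MatMap (Fin d) ι₁) :
    Matrix (ι₁ × Fin d) (ι₁ × Fin d) ℂ :=
  tensorIdT N (maxEntangled d d d)

open Classical in
/-- Square root of a matrix (positive semidefinite case, junk value `0` otherwise). -/
def matSqrt {ι : Type} [Fintype ι] [DecidableEq ι] (A : Matrix ι ι ℂ) : Matrix ι ι ℂ :=
  if h : A.PosSemidef then psdSqrt h else 0

/-- Fidelity `F(ρ,σ) = (tr √(√ρ σ √ρ))²`. -/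
def fidelity {ι : Type} [Fintype ι] [DecidableEq ι] (ρ σ : Matrix ι ι ℂ) : ℝ :=
  ((matSqrt (matSqrt ρ * σ * matSqrt ρ)).trace.re) ^ 2

section OpTasks

variable {α₀ β₀ α₁ β₁ α₀' β₀' α₁' β₁' : Type}
variable [Fintype α₀] [DecidableEq α₀] [Fintype β₀] [DecidableEq β₀]
variable [Fintype α₁] [DecidableEq α₁] [Fintype β₁] [DecidableEq β₁]
variable [Fintype α₀'] [DecidableEq α₀'] [Fintype β₀'] [DecidableEq β₀']
variable [Fintype α₁'] [DecidableEq α₁'] [Fintype β₁'] [DecidableEq β₁']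

/-- One-shot dynamic entanglement cost under SEPPSC. -/
def oneShotCostSEPP (ε : ℝ) (N : MatMap (α₀ × β₀) (α₁ × β₁)) : ℝ :=
  sInf { t : ℝ | ∃ (K : ℕ) (Θ : Superchannel (Fin K) (Fin K) (Fin K) (Fin K) α₀ β₀ α₁ β₁),
    IsSEPPSC Θ ∧
    (1/2) * diamondNorm (fun X => Θ.apply (swapChannel K) X - N X) ≤ ε ∧
    t = Real.logb 2 ((K : ℝ) ^ 2) }

/-- One-shot distillable dynamic entanglement under SEPPSC. -/
def oneShotDistillSEPP (ε : ℝ) (N : MatMap (α₀ × β₀) (α₁ × β₁)) : ℝ :=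
  sSup { t : ℝ | ∃ (K : ℕ) (Θ : Superchannel α₀ β₀ α₁ β₁ (Fin K) (Fin K) (Fin K) (Fin K)),
    IsSEPPSC Θ ∧
    (1/2) * diamondNorm (fun X => Θ.apply N X - swapChannel K X) ≤ ε ∧
    t = Real.logb 2 ((K : ℝ) ^ 2) }

/-- Hypothesis-testing relative entropy of dynamic entanglement. -/
def EH (ε : ℝ) (N : MatMap (α₀ × β₀) (α₁ × β₁)) : ℝ :=
  sSup { t : ℝ | ∃ (r : ℕ) (Ψ : Matrix ((α₀ × β₀) × Fin r) ((α₀ × β₀) × Fin r) ℂ)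
      (Q : Matrix ((α₁ × β₁) × Fin r) ((α₁ × β₁) × Fin r) ℂ),
    IsPureState Ψ ∧ Q.PosSemidef ∧ ((1 : Matrix ((α₁ × β₁) × Fin r) ((α₁ × β₁) × Fin r) ℂ) - Q).PosSemidef ∧
    1 - ε ≤ ((tensorIdT N Ψ * Q).trace).re ∧
    t = sInf { u : ℝ | ∃ M : MatMap (α₀ × β₀) (α₁ × β₁), IsSepChannel M ∧
        u = - Real.logb 2 (((tensorIdT M Ψ * Q).trace).re) } }

end OpTasks

/-- Reindexing a matrix map along equivalences of index types. -/
def reindexMap {ι₀ ι₁ κ₀ κ₁ : Type} (e₀ : ι₀ ≃ κ₀) (e₁ : ι₁ ≃ κ₁) (L : MatMap ι₀ ι₁) :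
    MatMap κ₀ κ₁ :=
  fun X => Matrix.reindex e₁ e₁ (L (Matrix.reindex e₀.symm e₀.symm X))

section Cat

variable {α₀ β₀ α₁ β₁ : Type}
variable [Fintype α₀] [DecidableEq α₀] [Fintype β₀] [DecidableEq β₀]
variable [Fintype α₁] [DecidableEq α₁] [Fintype β₁] [DecidableEq β₁]

/-- `N ⊗ F^L` as a bipartite channel for the cut `A C : B D` (catalyst `CD` of dimension `L×L`). -/
def tensorSwapCut (N : MatMap (α₀ × β₀) (α₁ × β₁)) (L : ℕ) :
    MatMap ((α₀ × Fin L) × (β₀ × Fin L)) ((α₁ × Fin L) × (β₁ × Fin L)) :=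
  reindexMap (Equiv.prodProdProdComm α₀ β₀ (Fin L) (Fin L))
             (Equiv.prodProdProdComm α₁ β₁ (Fin L) (Fin L))
             (tensorMap N (swapChannel L))

/-- One-shot catalytic dynamic entanglement cost under δ-SEPPSC. -/
def catalyticCost (δ ε : ℝ) (N : MatMap (α₀ × β₀) (α₁ × β₁)) : ℝ :=
  sInf { t : ℝ | ∃ (K L : ℕ)
      (Θ : Superchannel (Fin K × Fin L) (Fin K × Fin L) (Fin K × Fin L) (Fin K × Fin L)
            (α₀ × Fin L) (β₀ × Fin L) (α₁ × Fin L) (β₁ × Fin L)),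
    IsDeltaSEPPSC δ Θ ∧
    ∃ N' : MatMap (α₀ × β₀) (α₁ × β₁), IsChannel N' ∧
      (1/2) * diamondNorm (fun X => N' X - N X) ≤ ε ∧
      Θ.apply (tensorSwapCut (swapChannel K) L) = tensorSwapCut N' L ∧
      t = Real.logb 2 ((K : ℝ) ^ 2) }

end Cat

/-- Discrete Weyl operators on `ℂ^K`. -/
def weyl (K : ℕ) (k l : Fin K) : Matrix (Fin K) (Fin K) ℂ :=
  Matrix.of fun a s =>
    if (a : ℕ) = ((k : ℕ) + (s : ℕ)) % K
    then Complex.exp (2 * (Real.pi : ℂ) * Complex.I * ((s : ℕ) : ℂ) * ((l : ℕ) : ℂ) / (K : ℂ))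
    else 0

/-- `n`-fold tensor power of a matrix. -/
def matPow {ι : Type} [Fintype ι] (X : Matrix ι ι ℂ) (n : ℕ) :
    Matrix (Fin n → ι) (Fin n → ι) ℂ :=
  Matrix.of fun f g => ∏ t, X (f t) (g t)

/-- `n`-fold tensor power of a matrix map. -/
def powMap {ι₀ ι₁ : Type} [Fintype ι₀] [DecidableEq ι₀] (L : MatMap ι₀ ι₁) (n : ℕ) :
    MatMap (Fin n → ι₀) (Fin n → ι₁) :=
  fun X => Matrix.of fun f' g' => ∑ f : Fin n → ι₀, ∑ g : Fin n → ι₀,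
    X f g * ∏ t, L (Matrix.single (f t) (g t) 1) (f' t) (g' t)

section Pow

variable {α₀ β₀ α₁ β₁ : Type}
variable [Fintype α₀] [DecidableEq α₀] [Fintype β₀] [DecidableEq β₀]
variable [Fintype α₁] [DecidableEq α₁] [Fintype β₁] [DecidableEq β₁]

/-- `n`-fold tensor power of a bipartite channel, with cut `A^n : B^n`. -/
def powBi (N : MatMap (α₀ × β₀) (α₁ × β₁)) (n : ℕ) :
    MatMap ((Fin n → α₀) × (Fin n → β₀)) ((Fin n → α₁) × (Fin n → β₁)) :=
  reindexMap (Equiv.arrowProdEquivProdArrow (Fin n) (fun _ => α₀) (fun _ => β₀))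
             (Equiv.arrowProdEquivProdArrow (Fin n) (fun _ => α₁) (fun _ => β₁))
             (powMap N n)

/-- `φ^{⊗n}` of a bipartite input-reference state, regrouped as
`((A₀ⁿ × B₀ⁿ) × refⁿ)`. -/
def phiPow (n : ℕ)
    (φ : Matrix ((α₀ × β₀) × (α₀ × β₀)) ((α₀ × β₀) × (α₀ × β₀)) ℂ) :
    Matrix (((Fin n → α₀) × (Fin n → β₀)) × (Fin n → (α₀ × β₀)))
           (((Fin n → α₀) × (Fin n → β₀)) × (Fin n → (α₀ × β₀))) ℂ :=
  Matrix.reindex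
    ((Equiv.arrowProdEquivProdArrow (Fin n) (fun _ => α₀ × β₀) (fun _ => α₀ × β₀)).trans
      (Equiv.prodCongr (Equiv.arrowProdEquivProdArrow (Fin n) (fun _ => α₀) (fun _ => β₀)) (Equiv.refl _)))
    ((Equiv.arrowProdEquivProdArrow (Fin n) (fun _ => α₀ × β₀) (fun _ => α₀ × β₀)).trans
      (Equiv.prodCongr (Equiv.arrowProdEquivProdArrow (Fin n) (fun _ => α₀) (fun _ => β₀)) (Equiv.refl _)))
    (matPow φ n)

end Pow

open Classical in
/-- Base-2 matrix logarithm via the spectral decomposition (junk value `0` if not Hermitian). -/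
def matLogb2 {ι : Type} [Fintype ι] [DecidableEq ι] (A : Matrix ι ι ℂ) : Matrix ι ι ℂ :=
  if h : A.IsHermitian then
    (h.eigenvectorUnitary : Matrix ι ι ℂ) *
      Matrix.diagonal (fun i => ((Real.logb 2 (h.eigenvalues i) : ℝ) : ℂ)) *
      (star h.eigenvectorUnitary : Matrix ι ι ℂ)
  else 0

/-- Umegaki relative entropy `D(ρ‖σ) = tr ρ (log₂ ρ − log₂ σ)`. -/
def relEnt {ι : Type} [Fintype ι] [DecidableEq ι] (ρ σ : Matrix ι ι ℂ) : ℝ :=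
  ((ρ * (matLogb2 ρ - matLogb2 σ)).trace).re

section Liberal

variable {α₀ β₀ α₁ β₁ : Type}
variable [Fintype α₀] [DecidableEq α₀] [Fintype β₀] [DecidableEq β₀]
variable [Fintype α₁] [DecidableEq α₁] [Fintype β₁] [DecidableEq β₁]

/-- Zero-error one-shot dynamic entanglement cost under SEPPSC. -/
def zeroCostSEPP (N : MatMap (α₀ × β₀) (α₁ × β₁)) : ℝ :=
  sInf { t : ℝ | ∃ (K : ℕ) (Θ : Superchannel (Fin K) (Fin K) (Fin K) (Fin K) α₀ β₀ α₁ β₁),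
    IsSEPPSC Θ ∧ Θ.apply (swapChannel K) = N ∧ t = Real.logb 2 ((K : ℝ) ^ 2) }

/-- Liberal (asymptotic) dynamic entanglement cost under SEPPSC. -/
def liberalCost (N : MatMap (α₀ × β₀) (α₁ × β₁)) : ℝ :=
  limUnder (nhdsWithin (0 : ℝ) (Set.Ioi 0)) (fun ε : ℝ =>
    liminf (fun n : ℕ =>
      (1 / (n : ℝ)) * sSup { t : ℝ |
        ∃ φ : Matrix ((α₀ × β₀) × (α₀ × β₀)) ((α₀ × β₀) × (α₀ × β₀)) ℂ, IsState φ ∧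
          t = sInf { u : ℝ |
            ∃ N'' : MatMap ((Fin n → α₀) × (Fin n → β₀)) ((Fin n → α₁) × (Fin n → β₁)),
              IsChannel N'' ∧
              (1/2) * traceNorm
                (tensorIdT N'' (phiPow n φ) - tensorIdT (powBi N n) (phiPow n φ)) ≤ ε ∧
              u = zeroCostSEPP N'' } }) atTop)

/-- Liberal regularized relative entropy with respect to separable channels. -/
def liberalRelEnt (N : MatMap (α₀ × β₀) (α₁ × β₁)) : ℝ :=
  limUnder atTop (fun n : ℕ =>
    (1 / (n : ℝ)) * sSup { t : ℝ |
      ∃ φ : Matrix ((α₀ × β₀) × (α₀ × β₀)) ((α₀ × β₀) × (α₀ × β₀)) ℂ, IsState φ ∧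
        t = sInf { u : ℝ | ∃ M : MatMap (α₀ × β₀) (α₁ × β₁), IsSepChannel M ∧
          u = relEnt (tensorIdT (powBi N n) (phiPow n φ))
                     (tensorIdT (powBi M n) (phiPow n φ)) } })

end Liberal



section RobustnessAux

variable {ι ι₀ ι₁ ι₂ ρ : Type}

lemma real_smul_matrix (r : ℝ) (A : Matrix ι ι ℂ) : r • A = (r : ℂ) • A := by
  ext i j
  simp [Matrix.smul_apply, Complex.real_smul]

lemma psd_real_smul [Fintype ι] {A : Matrix ι ι ℂ} (hA : A.PosSemidef) {r : ℝ} (hr : 0 ≤ r) :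
    (r • A).PosSemidef := by
  rw [real_smul_matrix]
  refine Matrix.PosSemidef.of_dotProduct_mulVec_nonneg ?_ fun x => ?_
  · have hst : star (r : ℂ) = (r : ℂ) := by simp [Complex.star_def, Complex.conj_ofReal]
    show ((r : ℂ) • A)ᴴ = (r : ℂ) • A
    rw [Matrix.conjTranspose_smul, hst, hA.1.eq]
  · rw [Matrix.smul_mulVec, dotProduct_smul, smul_eq_mul]
    exact mul_nonneg (by exact_mod_cast hr) (hA.dotProduct_mulVec_nonneg x)

namespace IsLinearFun

variable {L : MatMap ι₀ ι₁}

protected lemma zero (h : IsLinearFun L) : L 0 = 0 := by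
  have h0 := h 1 0 0
  simp only [one_smul, add_zero] at h0
  exact add_eq_left.mp h0.symm

protected lemma add (h : IsLinearFun L) (X Y : Matrix ι₀ ι₀ ℂ) : L (X + Y) = L X + L Y := by
  have h0 := h 1 X Y
  simpa using h0

protected lemma csmul (h : IsLinearFun L) (c : ℂ) (X : Matrix ι₀ ι₀ ℂ) : L (c • X) = c • L X := by
  have h0 := h c X 0
  simpa [h.zero] using h0

protected lemma rsmul (h : IsLinearFun L) (r : ℝ) (X : Matrix ι₀ ι₀ ℂ) : L (r • X) = r • L X := by
  rw [real_smul_matrix, h.csmul, ← real_smul_matrix]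

protected lemma mix (h : IsLinearFun L) (c t : ℝ) (X Y : Matrix ι₀ ι₀ ℂ) :
    L (c • (X + t • Y)) = c • (L X + t • L Y) := by
  rw [h.rsmul c, h.add, h.rsmul t]

end IsLinearFun

lemma tensorIdT_comp (f : MatMap ι₂ ι₁) (g : MatMap ι₀ ι₂) (X : Matrix (ι₀ × ρ) (ι₀ × ρ) ℂ) :
    tensorIdT (fun Y => f (g Y)) X = tensorIdT f (tensorIdT g X) := rfl

lemma tensorIdT_mix (c t : ℝ) (F G : MatMap ι₀ ι₁) (X : Matrix (ι₀ × ρ) (ι₀ × ρ) ℂ) :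
    tensorIdT (fun Y => c • (F Y + t • G Y)) X = c • (tensorIdT F X + t • tensorIdT G X) := by
  ext p q
  simp [tensorIdT, Matrix.smul_apply, Matrix.add_apply]

lemma tensorIdT_combo (a b : ℝ) (F G : MatMap ι₀ ι₁) (X : Matrix (ι₀ × ρ) (ι₀ × ρ) ℂ) :
    tensorIdT (fun Y => a • F Y + b • G Y) X = a • tensorIdT F X + b • tensorIdT G X := by
  ext p q
  simp [tensorIdT, Matrix.smul_apply, Matrix.add_apply]

lemma tensorIdT_shape (a b : ℝ) (F G : MatMap ι₀ ι₁) (X : Matrix (ι₀ × ρ) (ι₀ × ρ) ℂ) :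
    tensorIdT (fun Y => a • (b • F Y - G Y)) X = a • (b • tensorIdT F X - tensorIdT G X) := by
  ext p q
  simp [tensorIdT, Matrix.smul_apply, Matrix.sub_apply]

lemma trace_tensorIdT [Fintype ι₀] [Fintype ι₁] [Fintype ρ] {L : MatMap ι₀ ι₁}
    (hL : IsTracePreserving L) (X : Matrix (ι₀ × ρ) (ι₀ × ρ) ℂ) :
    (tensorIdT (ρ := ρ) L X).trace = X.trace := by
  simp only [Matrix.trace, Matrix.diag]
  rw [Fintype.sum_prod_type, Finset.sum_comm]
  conv_rhs => rw [Fintype.sum_prod_type, Finset.sum_comm]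
  refine Finset.sum_congr rfl fun p _ => ?_
  have h0 := hL (Matrix.of fun i j => X (i, p) (j, p))
  simp only [Matrix.trace, Matrix.diag, Matrix.of_apply] at h0
  exact h0

end RobustnessAux

section PSDAux

variable {ι ρ : Type}

/-- Partial trace over the first tensor factor. -/
def ptrFst [Fintype ι] (Z : Matrix (ι × ρ) (ι × ρ) ℂ) : Matrix ρ ρ ℂ :=
  Matrix.of fun p q => ∑ m, Z (m, p) (m, q)

/-- `1 ⊗ P` on `ι × ρ`. -/
def idKron (ι : Type) [DecidableEq ι] (P : Matrix ρ ρ ℂ) : Matrix (ι × ρ) (ι × ρ) ℂ :=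
  Matrix.of fun p q => if p.1 = q.1 then P p.2 q.2 else 0

lemma ptrFst_herm [Fintype ι] {Z : Matrix (ι × ρ) (ι × ρ) ℂ} (hZ : Z.IsHermitian) :
    (ptrFst Z).IsHermitian := by
  ext p q
  simp only [Matrix.conjTranspose_apply, ptrFst, Matrix.of_apply, star_sum]
  exact Finset.sum_congr rfl fun m _ => hZ.apply (m, p) (m, q)

lemma idKron_herm [DecidableEq ι] {P : Matrix ρ ρ ℂ} (hP : P.IsHermitian) :
    (idKron ι P).IsHermitian := by
  ext x y
  obtain ⟨m, p⟩ := x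
  obtain ⟨n, q⟩ := y
  simp only [Matrix.conjTranspose_apply, idKron, Matrix.of_apply]
  by_cases h : n = m
  · subst h
    simp only [if_pos rfl]
    exact hP.apply p q
  · rw [if_neg h, if_neg (Ne.symm h), star_zero]

/-- The sesquilinear form of a matrix. -/
def qform [Fintype ι] (Z : Matrix ι ι ℂ) (u v : ι → ℂ) : ℂ :=
  dotProduct (star u) (Z *ᵥ v)

lemma qform_nonneg [Fintype ι] {Z : Matrix ι ι ℂ} (hZ : Z.PosSemidef) (u : ι → ℂ) :
    0 ≤ qform Z u u := hZ.dotProduct_mulVec_nonneg u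

lemma qform_sub_left [Fintype ι] (Z : Matrix ι ι ℂ) (u v w : ι → ℂ) :
    qform Z (u - v) w = qform Z u w - qform Z v w := by
  simp [qform, sub_dotProduct]

lemma qform_sub_right [Fintype ι] (Z : Matrix ι ι ℂ) (u v w : ι → ℂ) :
    qform Z u (v - w) = qform Z u v - qform Z u w := by
  simp [qform, Matrix.mulVec_sub, dotProduct_sub]

lemma qform_sum_left [Fintype ι] {κ : Type} (s : Finset κ) (Z : Matrix ι ι ℂ)
    (u : κ → ι → ℂ) (w : ι → ℂ) :
    qform Z (∑ i ∈ s, u i) w = ∑ i ∈ s, qform Z (u i) w := by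
  unfold qform
  rw [star_sum]
  simp only [dotProduct, Finset.sum_apply, Finset.sum_mul]
  exact Finset.sum_comm

lemma qform_sum_right [Fintype ι] {κ : Type} (s : Finset κ) (Z : Matrix ι ι ℂ)
    (u : ι → ℂ) (v : κ → ι → ℂ) :
    qform Z u (∑ j ∈ s, v j) = ∑ j ∈ s, qform Z u (v j) := by
  unfold qform
  have h1 : Z *ᵥ (∑ j ∈ s, v j) = ∑ j ∈ s, Z *ᵥ v j := by
    funext a
    simp only [Matrix.mulVec, dotProduct, Finset.sum_apply, Finset.mul_sum]
    exact Finset.sum_comm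
  rw [h1]
  simp only [dotProduct, Finset.sum_apply, Finset.mul_sum]
  exact Finset.sum_comm

lemma qform_sum_sum [Fintype ι] {κ : Type} (s : Finset κ) (Z : Matrix ι ι ℂ)
    (u v : κ → ι → ℂ) :
    qform Z (∑ i ∈ s, u i) (∑ j ∈ s, v j) = ∑ i ∈ s, ∑ j ∈ s, qform Z (u i) (v j) := by
  rw [qform_sum_left]
  exact Finset.sum_congr rfl fun i _ => qform_sum_right s Z (u i) v

end PSDAux

section KeyLemma

variable {ι ρ : Type}

lemma herm_real_smul {A : Matrix ι ι ℂ} (hA : A.IsHermitian) (r : ℝ) : (r • A).IsHermitian := by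
  rw [real_smul_matrix]
  show _ᴴ = _
  rw [Matrix.conjTranspose_smul, hA.eq]
  congr 1
  simp [Complex.star_def, Complex.conj_ofReal]

lemma nonneg_of_double {z : ℂ} (h : 0 ≤ z + z) : 0 ≤ z := by
  rw [Complex.le_def] at h ⊢
  simp only [Complex.add_re, Complex.add_im, Complex.zero_re, Complex.zero_im] at h ⊢
  constructor
  · linarith [h.1]
  · linarith [h.2]

lemma star_ite (c : Prop) [Decidable c] (a b : ℂ) :
    star (if c then a else b) = if c then star a else star b := apply_ite star c a b

lemma sum_if_indep {β : Type} [Fintype β] (c : Prop) [Decidable c] (f : β → ℂ) :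
    (∑ b : β, if c then f b else 0) = if c then ∑ b : β, f b else 0 := by
  split <;> simp

lemma wform_eq [Fintype ι] [DecidableEq ι] [Fintype ρ] (Z : Matrix (ι × ρ) (ι × ρ) ℂ)
    (x : ι × ρ → ℂ) :
    dotProduct (star x) ((idKron ι (ptrFst Z)) *ᵥ x)
      = ∑ m : ι, ∑ n : ι, qform Z (fun z => if z.1 = n then x (m, z.2) else 0)
          (fun z => if z.1 = n then x (m, z.2) else 0) := by
  simp only [dotProduct, Matrix.mulVec, idKron, ptrFst, qform, Matrix.of_apply,
    Pi.star_apply, Fintype.sum_prod_type, ite_mul, zero_mul, mul_ite, mul_zero,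
    star_ite, star_zero, Finset.mul_sum, Finset.sum_mul, sum_if_indep, Finset.sum_ite_eq, Finset.sum_ite_eq',
    Finset.mem_univ, if_true]
  refine Finset.sum_congr rfl fun m _ => ?_
  calc (∑ p : ρ, ∑ q : ρ, ∑ k : ι, star (x (m, p)) * (Z (k, p) (k, q) * x (m, q)))
      = ∑ p : ρ, ∑ k : ι, ∑ q : ρ, star (x (m, p)) * (Z (k, p) (k, q) * x (m, q)) :=
        Finset.sum_congr rfl fun p _ => Finset.sum_comm
    _ = ∑ k : ι, ∑ p : ρ, ∑ q : ρ, star (x (m, p)) * (Z (k, p) (k, q) * x (m, q)) :=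
        Finset.sum_comm

lemma key_psd [Fintype ι] [DecidableEq ι] [Fintype ρ] {Z : Matrix (ι × ρ) (ι × ρ) ℂ}
    (hZ : Z.PosSemidef) :
    (((Fintype.card ι : ℝ)) • idKron ι (ptrFst Z) - Z).PosSemidef := by
  refine Matrix.PosSemidef.of_dotProduct_mulVec_nonneg ?_ ?_
  · exact (herm_real_smul (idKron_herm (ptrFst_herm hZ.1)) _).sub hZ.1
  · intro x
    set d : ℕ := Fintype.card ι with hd
    set v : ι → ι → (ι × ρ) → ℂ := fun m n z => if z.1 = n then x (m, z.2) else 0 with hv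
    have hx : x = ∑ m, v m m := by
      funext z
      rw [Finset.sum_apply]
      simp only [hv, Finset.sum_ite_eq, Finset.mem_univ, if_true]
    set A : ℂ := ∑ m, ∑ n, qform Z (v m n) (v m n) with hA
    set Adiag : ℂ := ∑ m, qform Z (v m m) (v m m) with hAdiag
    set Qx : ℂ := qform Z x x with hQx
    have hWf : dotProduct (star x) ((idKron ι (ptrFst Z)) *ᵥ x) = A := wform_eq Z x
    have hQxx : Qx = ∑ m, ∑ n, qform Z (v m m) (v n n) := by
      have h0 := qform_sum_sum Finset.univ Z (fun m => v m m) (fun m => v m m)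
      rw [← hx] at h0
      exact h0
    have hQxx' : Qx = ∑ m, ∑ n, qform Z (v n n) (v m m) := by
      rw [hQxx]
      exact Finset.sum_comm
    have c1 : (∑ _m : ι, ∑ _n : ι, qform Z (v _m _m) (v _m _m)) = (d : ℂ) * Adiag := by
      simp only [Finset.sum_const, Finset.card_univ, nsmul_eq_mul, ← hd]
      rw [hAdiag, Finset.mul_sum]
    have c2 : (∑ _m : ι, ∑ n : ι, qform Z (v n n) (v n n)) = (d : ℂ) * Adiag := by
      rw [← hAdiag]
      simp only [Finset.sum_const, Finset.card_univ, nsmul_eq_mul, ← hd]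
    have hD2 : (∑ m, ∑ n, qform Z (v m m - v n n) (v m m - v n n))
        = (d : ℂ) * Adiag + (d : ℂ) * Adiag - Qx - Qx := by
      have expand : ∀ m n : ι, qform Z (v m m - v n n) (v m m - v n n)
          = qform Z (v m m) (v m m) + qform Z (v n n) (v n n)
            - qform Z (v m m) (v n n) - qform Z (v n n) (v m m) := by
        intro m n
        rw [qform_sub_left, qform_sub_right, qform_sub_right]
        ring
      calc (∑ m, ∑ n, qform Z (v m m - v n n) (v m m - v n n))
          = ∑ m, ∑ n, (qform Z (v m m) (v m m) + qform Z (v n n) (v n n)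
              - qform Z (v m m) (v n n) - qform Z (v n n) (v m m)) :=
            Finset.sum_congr rfl fun m _ => Finset.sum_congr rfl fun n _ => expand m n
        _ = ((∑ m : ι, ∑ n : ι, qform Z (v m m) (v m m)) + (∑ m : ι, ∑ n : ι, qform Z (v n n) (v n n)))
              - (∑ m, ∑ n, qform Z (v m m) (v n n)) - (∑ m, ∑ n, qform Z (v n n) (v m m)) := by
            simp only [Finset.sum_sub_distrib, Finset.sum_add_distrib]
        _ = (d : ℂ) * Adiag + (d : ℂ) * Adiag - Qx - Qx := by
            rw [c1, c2, ← hQxx, ← hQxx']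
    have hD : (0 : ℂ) ≤ ∑ m, ∑ n, qform Z (v m m - v n n) (v m m - v n n) :=
      Finset.sum_nonneg fun m _ => Finset.sum_nonneg fun n _ => qform_nonneg hZ _
    have hE : Adiag ≤ A := by
      refine Finset.sum_le_sum fun m _ => ?_
      exact Finset.single_le_sum (f := fun n => qform Z (v m n) (v m n))
        (fun n _ => qform_nonneg hZ _) (Finset.mem_univ m)
    have hdc : (0 : ℂ) ≤ (d : ℂ) := by
      rw [Complex.le_def]
      simp
    have hdA : (0 : ℂ) ≤ (d : ℂ) * (A - Adiag) := mul_nonneg hdc (sub_nonneg.mpr hE)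
    have hF : dotProduct (star x) ((((d : ℝ)) • idKron ι (ptrFst Z) - Z) *ᵥ x)
        = (d : ℂ) * A - Qx := by
      rw [Matrix.sub_mulVec, dotProduct_sub, real_smul_matrix,
        Matrix.smul_mulVec, dotProduct_smul, smul_eq_mul, hWf]
      rfl
    rw [hF]
    refine nonneg_of_double ?_
    have heq : ((d : ℂ) * A - Qx) + ((d : ℂ) * A - Qx)
        = (∑ m, ∑ n, qform Z (v m m - v n n) (v m m - v n n))
          + ((d : ℂ) * (A - Adiag) + (d : ℂ) * (A - Adiag)) := by
      rw [hD2]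
      ring
    rw [heq]
    exact add_nonneg hD (add_nonneg hdA hdA)

end KeyLemma

section ChanAux

variable {ι ι₀ ι₁ ι₂ ρ : Type}

lemma ptrFst_psd [Fintype ι] [DecidableEq ι] [Fintype ρ] {Z : Matrix (ι × ρ) (ι × ρ) ℂ}
    (hZ : Z.PosSemidef) : (ptrFst Z).PosSemidef := by
  refine Matrix.PosSemidef.of_dotProduct_mulVec_nonneg (ptrFst_herm hZ.1) fun y => ?_
  have hform : dotProduct (star y) ((ptrFst Z) *ᵥ y)
      = ∑ n : ι, qform Z (fun z => if z.1 = n then y z.2 else 0)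
          (fun z => if z.1 = n then y z.2 else 0) := by
    simp only [dotProduct, Matrix.mulVec, ptrFst, qform, Matrix.of_apply,
      Pi.star_apply, Fintype.sum_prod_type, ite_mul, zero_mul, mul_ite, mul_zero,
      star_ite, star_zero, Finset.mul_sum, Finset.sum_mul, sum_if_indep, Finset.sum_ite_eq,
      Finset.sum_ite_eq', Finset.mem_univ, if_true]
    calc (∑ p : ρ, ∑ q : ρ, ∑ n : ι, star (y p) * (Z (n, p) (n, q) * y q))
        = ∑ p : ρ, ∑ n : ι, ∑ q : ρ, star (y p) * (Z (n, p) (n, q) * y q) :=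
          Finset.sum_congr rfl fun p _ => Finset.sum_comm
      _ = ∑ n : ι, ∑ p : ρ, ∑ q : ρ, star (y p) * (Z (n, p) (n, q) * y q) :=
          Finset.sum_comm
  rw [hform]
  exact Finset.sum_nonneg fun n _ => qform_nonneg hZ _

lemma idKron_psd (κ : Type) [Fintype κ] [DecidableEq κ] [Fintype ρ] {P : Matrix ρ ρ ℂ}
    (hP : P.PosSemidef) : (idKron κ P).PosSemidef := by
  refine Matrix.PosSemidef.of_dotProduct_mulVec_nonneg (idKron_herm hP.1) fun x => ?_
  have hform : dotProduct (star x) ((idKron κ P) *ᵥ x)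
      = ∑ m : κ, dotProduct (star fun p => x (m, p)) (P *ᵥ fun p => x (m, p)) := by
    simp only [dotProduct, Matrix.mulVec, idKron, Matrix.of_apply, Pi.star_apply,
      Fintype.sum_prod_type, ite_mul, zero_mul, mul_ite, mul_zero, star_ite, star_zero,
      sum_if_indep, Finset.sum_ite_eq, Finset.sum_ite_eq', Finset.mem_univ, if_true,
      Finset.mul_sum]
  rw [hform]
  exact Finset.sum_nonneg fun m _ => hP.dotProduct_mulVec_nonneg _

/-- The completely depolarizing channel. -/
def depol (ι₀ ι₁ : Type) [Fintype ι₀] [Fintype ι₁] [DecidableEq ι₁] : MatMap ι₀ ι₁ :=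
  fun X => ((Fintype.card ι₁ : ℂ)⁻¹ * X.trace) • 1

lemma depol_linear [Fintype ι₀] [Fintype ι₁] [DecidableEq ι₁] : IsLinearFun (depol ι₀ ι₁) := by
  intro c X Y
  unfold depol
  ext i j
  simp only [Matrix.trace_add, Matrix.trace_smul, Matrix.add_apply, Matrix.smul_apply,
    smul_eq_mul]
  ring

lemma depol_tp [Fintype ι₀] [Fintype ι₁] [DecidableEq ι₁] [Nonempty ι₁] :
    IsTracePreserving (depol ι₀ ι₁) := by
  intro X
  unfold depol
  rw [Matrix.trace_smul, Matrix.trace_one, smul_eq_mul]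
  have hne : (Fintype.card ι₁ : ℂ) ≠ 0 := by
    simp [Fintype.card_ne_zero]
  field_simp

lemma tensorIdT_depol [Fintype ι₀] [Fintype ι₁] [DecidableEq ι₁]
    (X : Matrix (ι₀ × ρ) (ι₀ × ρ) ℂ) :
    tensorIdT (ρ := ρ) (depol ι₀ ι₁) X
      = ((Fintype.card ι₁ : ℝ))⁻¹ • idKron ι₁ (ptrFst X) := by
  ext z w
  obtain ⟨m, p⟩ := z
  obtain ⟨n, q⟩ := w
  simp only [tensorIdT, depol, idKron, ptrFst, Matrix.of_apply, Matrix.smul_apply,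
    Matrix.one_apply, Matrix.trace, Matrix.diag, smul_eq_mul, mul_ite, mul_one, mul_zero,
    Complex.real_smul, Complex.ofReal_inv, Complex.ofReal_natCast]

lemma depol_cp [Fintype ι₀] [DecidableEq ι₀] [Fintype ι₁] [DecidableEq ι₁] :
    IsCompletelyPositive (depol ι₀ ι₁) := by
  intro r X hX
  rw [tensorIdT_depol]
  exact psd_real_smul (idKron_psd ι₁ (ptrFst_psd hX)) (by positivity)

lemma depol_channel [Fintype ι₀] [DecidableEq ι₀] [Fintype ι₁] [DecidableEq ι₁] [Nonempty ι₁] :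
    IsChannel (depol ι₀ ι₁) := ⟨depol_linear, depol_cp, depol_tp⟩

lemma tensorIdT_linear {L : MatMap ι₀ ι₁} (hL : IsLinearFun L) :
    IsLinearFun (tensorIdT (ρ := ρ) L) := by
  intro c X Y
  ext z w
  have harg : (Matrix.of fun i j => (c • X + Y) (i, z.2) (j, w.2))
      = c • (Matrix.of fun i j => X (i, z.2) (j, w.2))
        + (Matrix.of fun i j => Y (i, z.2) (j, w.2)) := by
    ext i j
    simp
  show L (Matrix.of fun i j => (c • X + Y) (i, z.2) (j, w.2)) z.1 w.1 = _
  rw [harg, hL c _ _]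
  simp [tensorIdT]

lemma IsCompletelyPositive.tensorIdT_cp [Fintype ι₀] [Fintype ι₁] {L : MatMap ι₀ ι₁}
    (hL : IsCompletelyPositive L) (e : ℕ) :
    IsCompletelyPositive (tensorIdT (ρ := Fin e) L) := by
  intro r X hX
  set φ : (ι₀ × Fin (e * r)) → ((ι₀ × Fin e) × Fin r) :=
    fun z => ((z.1, (finProdFinEquiv.symm z.2).1), (finProdFinEquiv.symm z.2).2) with hφ
  have h2 := hL (e * r) (X.submatrix φ φ) (hX.submatrix φ)
  set ψ : ((ι₁ × Fin e) × Fin r) → (ι₁ × Fin (e * r)) :=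
    fun z => (z.1.1, finProdFinEquiv (z.1.2, z.2)) with hψ
  have key : tensorIdT (tensorIdT L) X = (tensorIdT L (X.submatrix φ φ)).submatrix ψ ψ := by
    ext z w
    obtain ⟨⟨m, a⟩, u⟩ := z
    obtain ⟨⟨n, b⟩, vv⟩ := w
    simp only [tensorIdT, Matrix.submatrix_apply, Matrix.of_apply, hψ, hφ,
      Equiv.symm_apply_apply]
  rw [key]
  exact h2.submatrix ψ

lemma IsChannel.tensorIdT_chan [Fintype ι₀] [Fintype ι₁] {L : MatMap ι₀ ι₁}
    (hL : IsChannel L) (e : ℕ) : IsChannel (tensorIdT (ρ := Fin e) L) :=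
  ⟨tensorIdT_linear hL.1, hL.2.1.tensorIdT_cp e, fun X => trace_tensorIdT hL.2.2 X⟩

lemma IsChannel.comp [Fintype ι₀] [Fintype ι₁] [Fintype ι₂] {f : MatMap ι₁ ι₂}
    {g : MatMap ι₀ ι₁} (hf : IsChannel f) (hg : IsChannel g) :
    IsChannel (fun X => f (g X)) := by
  refine ⟨?_, ?_, ?_⟩
  · intro c X Y
    show f (g (c • X + Y)) = c • f (g X) + f (g Y)
    rw [hg.1 c X Y, hf.1 c (g X) (g Y)]
  · intro r X hX
    rw [tensorIdT_comp]
    exact hf.2.1 r _ (hg.2.1 r X hX)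
  · intro X
    rw [hf.2.2 (g X), hg.2.2 X]

lemma IsChannel.combo [Fintype ι₀] [Fintype ι₁] {F G : MatMap ι₀ ι₁}
    (hF : IsChannel F) (hG : IsChannel G) {a b : ℝ} (ha : 0 ≤ a) (hb : 0 ≤ b)
    (hab : a + b = 1) : IsChannel (fun X => a • F X + b • G X) := by
  refine ⟨?_, ?_, ?_⟩
  · intro c X Y
    show a • F (c • X + Y) + b • G (c • X + Y) = _
    rw [hF.1 c X Y, hG.1 c X Y]
    ext i j
    simp only [Matrix.add_apply, Matrix.smul_apply, smul_eq_mul, Complex.real_smul]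
    ring
  · intro r X hX
    rw [tensorIdT_combo]
    exact (psd_real_smul (hF.2.1 r X hX) ha).add (psd_real_smul (hG.2.1 r X hX) hb)
  · intro X
    rw [Matrix.trace_add, Matrix.trace_smul, Matrix.trace_smul, hF.2.2, hG.2.2,
      ← add_smul, hab, one_smul]

end ChanAux

section PtrAux
variable {ι₀ ι₁ ρ : Type}

lemma ptrFst_tensorIdT [Fintype ι₀] [Fintype ι₁] {L : MatMap ι₀ ι₁}
    (hL : IsTracePreserving L) (X : Matrix (ι₀ × ρ) (ι₀ × ρ) ℂ) :
    ptrFst (tensorIdT (ρ := ρ) L X) = ptrFst X := by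
  ext p q
  show (∑ m, tensorIdT L X (m, p) (m, q)) = ∑ i, X (i, p) (i, q)
  have h0 := hL (Matrix.of fun i j => X (i, p) (j, q))
  simp only [Matrix.trace, Matrix.diag, Matrix.of_apply] at h0
  exact h0

end PtrAux

section SuperAux

variable {γ₀ δ₀ γ₁ δ₁ γ₀' δ₀' γ₁' δ₁' : Type}
variable [Fintype γ₀] [DecidableEq γ₀] [Fintype δ₀] [DecidableEq δ₀]
variable [Fintype γ₁] [DecidableEq γ₁] [Fintype δ₁] [DecidableEq δ₁]
variable [Fintype γ₀'] [DecidableEq γ₀'] [Fintype δ₀'] [DecidableEq δ₀']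
variable [Fintype γ₁'] [DecidableEq γ₁'] [Fintype δ₁'] [DecidableEq δ₁']

lemma Superchannel.apply_channel (Θ : Superchannel γ₀ δ₀ γ₁ δ₁ γ₀' δ₀' γ₁' δ₁')
    {E : MatMap (γ₀ × δ₀) (γ₁ × δ₁)} (hE : IsChannel E) : IsChannel (Θ.apply E) := by
  have h1 : IsChannel (fun X : Matrix (γ₀' × δ₀') (γ₀' × δ₀') ℂ => tensorIdT E (Θ.pre X)) :=
    IsChannel.comp (hE.tensorIdT_chan Θ.e) Θ.pre_channel
  show IsChannel (fun X => Θ.post ((fun Y => tensorIdT E (Θ.pre Y)) X))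
  exact IsChannel.comp Θ.post_channel h1

lemma Superchannel.apply_mix (Θ : Superchannel γ₀ δ₀ γ₁ δ₁ γ₀' δ₀' γ₁' δ₁')
    (c t : ℝ) (F G : MatMap (γ₀ × δ₀) (γ₁ × δ₁)) (X : Matrix (γ₀' × δ₀') (γ₀' × δ₀') ℂ) :
    Θ.apply (fun Y => c • (F Y + t • G Y)) X = c • (Θ.apply F X + t • Θ.apply G X) := by
  show Θ.post (tensorIdT (fun Y => c • (F Y + t • G Y)) (Θ.pre X)) = _
  rw [tensorIdT_mix]
  exact Θ.post_channel.1.mix c t _ _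

lemma sum_if_indep_mat {β M : Type} [Fintype β] [AddCommMonoid M] (c : Prop) [Decidable c]
    (f : β → M) : (∑ b : β, if c then f b else 0) = if c then ∑ b : β, f b else 0 := by
  split <;> simp

lemma trace_stdBasis {n : Type} [Fintype n] [DecidableEq n] (i j : n) :
    (Matrix.single i j (1 : ℂ)).trace = if i = j then 1 else 0 := by
  by_cases h : i = j
  · subst h
    rw [if_pos rfl]
    exact Matrix.trace_single_eq_same i 1
  · rw [if_neg h]
    exact Matrix.trace_single_eq_of_ne i j 1 h

lemma tensorMap_depol (X : Matrix (γ₀ × δ₀) (γ₀ × δ₀) ℂ) :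
    tensorMap (depol γ₀ γ₁) (depol δ₀ δ₁) X = depol (γ₀ × δ₀) (γ₁ × δ₁) X := by
  unfold tensorMap
  have step : ∀ (i j : γ₀) (k l : δ₀),
      (depol γ₀ γ₁ (Matrix.single i j 1) ⊗ₖ depol δ₀ δ₁ (Matrix.single k l 1))
        = (if i = j ∧ k = l then
            ((Fintype.card γ₁ : ℂ)⁻¹ * (Fintype.card δ₁ : ℂ)⁻¹) • (1 : Matrix (γ₁ × δ₁) (γ₁ × δ₁) ℂ)
          else 0) := by
    intro i j k l
    unfold depol
    rw [trace_stdBasis, trace_stdBasis, Matrix.smul_kronecker, Matrix.kronecker_smul,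
      Matrix.one_kronecker_one, smul_smul]
    by_cases h1 : i = j <;> by_cases h2 : k = l <;>
      simp [h1, h2]
  calc (∑ i : γ₀, ∑ j : γ₀, ∑ k : δ₀, ∑ l : δ₀, X (i, k) (j, l) •
        (depol γ₀ γ₁ (Matrix.single i j 1) ⊗ₖ depol δ₀ δ₁ (Matrix.single k l 1)))
      = ∑ i : γ₀, ∑ j : γ₀, ∑ k : δ₀, ∑ l : δ₀, (if i = j ∧ k = l then
          X (i, k) (j, l) • (((Fintype.card γ₁ : ℂ)⁻¹ * (Fintype.card δ₁ : ℂ)⁻¹)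
            • (1 : Matrix (γ₁ × δ₁) (γ₁ × δ₁) ℂ)) else 0) := by
        refine Finset.sum_congr rfl fun i _ => Finset.sum_congr rfl fun j _ =>
          Finset.sum_congr rfl fun k _ => Finset.sum_congr rfl fun l _ => ?_
        rw [step i j k l]
        by_cases h : i = j ∧ k = l <;> simp [h]
    _ = ∑ i : γ₀, ∑ k : δ₀, X (i, k) (i, k) • (((Fintype.card γ₁ : ℂ)⁻¹
          * (Fintype.card δ₁ : ℂ)⁻¹) • (1 : Matrix (γ₁ × δ₁) (γ₁ × δ₁) ℂ)) := by
        refine Finset.sum_congr rfl fun i _ => ?_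
        simp only [ite_and, sum_if_indep_mat, Finset.sum_ite_eq, Finset.mem_univ, if_true]
    _ = depol (γ₀ × δ₀) (γ₁ × δ₁) X := by
        unfold depol
        have hcard : (Fintype.card (γ₁ × δ₁) : ℂ) = (Fintype.card γ₁ : ℂ) * (Fintype.card δ₁ : ℂ) := by
          rw [Fintype.card_prod]
          push_cast
          ring
        rw [hcard, mul_inv]
        simp only [smul_smul, ← Finset.sum_smul]
        congr 1
        simp only [Matrix.trace, Matrix.diag, Fintype.sum_prod_type, Finset.mul_sum]
        refine Finset.sum_congr rfl fun i _ => Finset.sum_congr rfl fun k _ => by ring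

end SuperAux

section RobLemmas

variable {a₀ b₀ a₁ b₁ : Type}
variable [Fintype a₀] [DecidableEq a₀] [Fintype b₀] [DecidableEq b₀]
variable [Fintype a₁] [DecidableEq a₁] [Fintype b₁] [DecidableEq b₁]

def RobSet (N : MatMap (a₀ × b₀) (a₁ × b₁)) : Set ℝ :=
  { s : ℝ | 0 ≤ s ∧ ∃ M : MatMap (a₀ × b₀) (a₁ × b₁), IsChannel M ∧
    IsSepChannel (fun X => (1 + s)⁻¹ • (N X + s • M X)) }

lemma genRobustness_eq (N : MatMap (a₀ × b₀) (a₁ × b₁)) :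
    genRobustness N = sInf (RobSet N) := rfl

lemma robSet_bdd (N : MatMap (a₀ × b₀) (a₁ × b₁)) : BddBelow (RobSet N) :=
  ⟨0, fun _ hs => hs.1⟩

lemma genRob_le {N : MatMap (a₀ × b₀) (a₁ × b₁)} {s : ℝ} (hs : s ∈ RobSet N) :
    genRobustness N ≤ s :=
  csInf_le (robSet_bdd N) hs

lemma genRob_nonneg {N : MatMap (a₀ × b₀) (a₁ × b₁)} (h : (RobSet N).Nonempty) :
    0 ≤ genRobustness N :=
  le_csInf h fun _ hb => hb.1

lemma finRob {E : MatMap (a₀ × b₀) (a₁ × b₁)} (hE : IsChannel E) : (RobSet E).Nonempty := by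
  classical
  rcases isEmpty_or_nonempty (a₁ × b₁) with hemp | hne
  · refine ⟨0, le_refl 0, E, hE, ?_⟩
    have hzero : ∀ Y : Matrix (a₁ × b₁) (a₁ × b₁) ℂ, Y = 0 := fun Y => by
      ext i j
      exact (hemp.false i).elim
    have hfun : (fun X => (1 + (0 : ℝ))⁻¹ • (E X + (0 : ℝ) • E X)) = E := by
      funext X
      simp
    rw [hfun]
    refine ⟨hE, 0, Fin.elim0, Fin.elim0, fun k => k.elim0, fun X => ?_⟩
    rw [hzero (E X)]
    simp
  · have hna : Nonempty a₁ := ⟨hne.some.1⟩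
    have hnb : Nonempty b₁ := ⟨hne.some.2⟩
    set d : ℝ := (Fintype.card (a₁ × b₁) : ℝ) with hd
    have hd0 : 0 < d := by
      rw [hd]
      exact_mod_cast Fintype.card_pos
    set s : ℝ := d ^ 2 with hsdef
    have hs0 : 0 < s := by positivity
    have hΩchan : IsChannel (depol (a₀ × b₀) (a₁ × b₁)) := depol_channel
    set M : MatMap (a₀ × b₀) (a₁ × b₁) :=
      fun X => s⁻¹ • ((1 + s) • depol (a₀ × b₀) (a₁ × b₁) X - E X) with hM
    have hMchan : IsChannel M := by
      refine ⟨?_, ?_, ?_⟩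
      · intro c X Y
        show s⁻¹ • ((1 + s) • depol (a₀ × b₀) (a₁ × b₁) (c • X + Y) - E (c • X + Y)) = _
        rw [hΩchan.1 c X Y, hE.1 c X Y]
        ext i j
        simp only [Matrix.smul_apply, Matrix.sub_apply, Matrix.add_apply, smul_eq_mul,
          Complex.real_smul, hM]
        ring
      · intro r X hX
        show (tensorIdT (fun Y =>
          s⁻¹ • ((1 + s) • depol (a₀ × b₀) (a₁ × b₁) Y - E Y)) X).PosSemidef
        rw [tensorIdT_shape]
        have hZ : (tensorIdT E X).PosSemidef := hE.2.1 r X hX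
        have hΩX : tensorIdT (ρ := Fin r) (depol (a₀ × b₀) (a₁ × b₁)) X
            = d⁻¹ • idKron (a₁ × b₁) (ptrFst X) := by
          rw [hd]
          exact tensorIdT_depol X
        have hptr : ptrFst X = ptrFst (tensorIdT E X) := (ptrFst_tensorIdT hE.2.2 X).symm
        rw [hΩX, hptr]
        have hco : (1 + s) * d⁻¹ = d + d⁻¹ := by
          rw [hsdef]
          field_simp
          ring
        have hre : (1 + s) • (d⁻¹ • idKron (a₁ × b₁) (ptrFst (tensorIdT E X))) - tensorIdT E X
            = (d • idKron (a₁ × b₁) (ptrFst (tensorIdT E X)) - tensorIdT E X)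
              + d⁻¹ • idKron (a₁ × b₁) (ptrFst (tensorIdT E X)) := by
          rw [smul_smul, hco, add_smul]
          abel
        rw [hre]
        have hpsd1 : (d • idKron (a₁ × b₁) (ptrFst (tensorIdT E X))
            - tensorIdT E X).PosSemidef := by
          rw [hd]
          exact key_psd hZ
        have hpsd2 : (d⁻¹ • idKron (a₁ × b₁) (ptrFst (tensorIdT E X))).PosSemidef :=
          psd_real_smul (idKron_psd _ (ptrFst_psd hZ)) (by positivity)
        exact psd_real_smul (hpsd1.add hpsd2) (by positivity)
      · intro X
        show ((s⁻¹ : ℝ) • ((1 + s) • depol (a₀ × b₀) (a₁ × b₁) X - E X)).trace = X.trace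
        rw [Matrix.trace_smul, Matrix.trace_sub, Matrix.trace_smul, hΩchan.2.2 X, hE.2.2 X,
          Complex.real_smul, Complex.real_smul]
        have hsne : ((s : ℝ) : ℂ) ≠ 0 := by
          exact_mod_cast hs0.ne'
        push_cast
        field_simp
        ring
    refine ⟨s, hs0.le, M, hMchan, ?_⟩
    have hmix : (fun X => (1 + s)⁻¹ • (E X + s • M X)) = depol (a₀ × b₀) (a₁ × b₁) := by
      funext X
      show (1 + s)⁻¹ • (E X + s • (s⁻¹ • ((1 + s) • depol (a₀ × b₀) (a₁ × b₁) X - E X)))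
        = depol (a₀ × b₀) (a₁ × b₁) X
      rw [smul_smul, mul_inv_cancel₀ hs0.ne', one_smul]
      have h2 : E X + ((1 + s) • depol (a₀ × b₀) (a₁ × b₁) X - E X)
          = (1 + s) • depol (a₀ × b₀) (a₁ × b₁) X := by
        abel
      rw [h2, smul_smul, inv_mul_cancel₀ (by positivity), one_smul]
    rw [hmix]
    refine ⟨hΩchan, 1, fun _ => depol a₀ a₁, fun _ => depol b₀ b₁,
      fun _ => ⟨depol_linear, depol_cp, depol_linear, depol_cp⟩, fun X => ?_⟩
    rw [Fin.sum_univ_one]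
    exact (tensorMap_depol X).symm

end RobLemmas

section Statements


variable {α₀ β₀ α₁ β₁ α₀' β₀' α₁' β₁' : Type}
variable [Fintype α₀] [DecidableEq α₀] [Fintype β₀] [DecidableEq β₀]
variable [Fintype α₁] [DecidableEq α₁] [Fintype β₁] [DecidableEq β₁]
variable [Fintype α₀'] [DecidableEq α₀'] [Fintype β₀'] [DecidableEq β₀']
variable [Fintype α₁'] [DecidableEq α₁'] [Fintype β₁'] [DecidableEq β₁']

theorem stmt5 (δ : ℝ) (hδ : 0 ≤ δ)
    (Θ : Superchannel α₀ β₀ α₁ β₁ α₀' β₀' α₁' β₁') (hΘ : IsDeltaSEPPSC δ Θ)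
    (N : MatMap (α₀ × β₀) (α₁ × β₁)) (hN : IsChannel N) :
    LRgen (Θ.apply N) ≤ LRgen N + Real.logb 2 (1 + δ) := by
  classical
  have hΘN : IsChannel (Θ.apply N) := Θ.apply_channel hN
  have hSN : (RobSet N).Nonempty := finRob hN
  have hSΘ : (RobSet (Θ.apply N)).Nonempty := finRob hΘN
  have hgN : 0 ≤ genRobustness N := genRob_nonneg hSN
  have hgΘ : 0 ≤ genRobustness (Θ.apply N) := genRob_nonneg hSΘ
  -- main claim
  have claim : ∀ s ∈ RobSet N, ∀ η : ℝ, 0 < η →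
      genRobustness (Θ.apply N) ≤ (1 + s) * (1 + δ + η) - 1 := by
    rintro s ⟨hs0, M, hMchan, hsep⟩ η hη
    have hDchan : IsChannel (fun X => (1 + s)⁻¹ • (N X + s • M X)) := hsep.1
    have hΘD : genRobustness (Θ.apply (fun X => (1 + s)⁻¹ • (N X + s • M X))) ≤ δ :=
      hΘ _ hsep
    have hSD : (RobSet (Θ.apply (fun X => (1 + s)⁻¹ • (N X + s • M X)))).Nonempty :=
      finRob (Θ.apply_channel hDchan)
    obtain ⟨r, hrmem, hrlt⟩ := exists_lt_of_csInf_lt hSD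
      (show sInf (RobSet (Θ.apply (fun X => (1 + s)⁻¹ • (N X + s • M X)))) < δ + η from
        lt_of_le_of_lt hΘD (by linarith))
    obtain ⟨hr0, M', hM'chan, hsep'⟩ := hrmem
    have happly : ∀ X, Θ.apply (fun X => (1 + s)⁻¹ • (N X + s • M X)) X
        = (1 + s)⁻¹ • (Θ.apply N X + s • Θ.apply M X) :=
      fun X => Θ.apply_mix (1 + s)⁻¹ s N M X
    have hΘM : IsChannel (Θ.apply M) := Θ.apply_channel hMchan
    have hs'0 : 0 ≤ s + r + s * r := by positivity
    by_cases hz : s + r + s * r = 0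
    · have hs00 : s = 0 := by nlinarith
      have hr00 : r = 0 := by nlinarith
      have hmem0 : (0 : ℝ) ∈ RobSet (Θ.apply N) := by
        refine ⟨le_refl 0, M', hM'chan, ?_⟩
        have hfun : (fun X => (1 + (0 : ℝ))⁻¹ • (Θ.apply N X + (0 : ℝ) • M' X))
            = (fun X => (1 + r)⁻¹ •
                (Θ.apply (fun X => (1 + s)⁻¹ • (N X + s • M X)) X + r • M' X)) := by
          funext X
          rw [happly X, hs00, hr00]
          norm_num
        rw [hfun]
        exact hsep'
      have h0 := genRob_le hmem0
      nlinarith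
    · have hs'pos : 0 < s + r + s * r := lt_of_le_of_ne hs'0 (Ne.symm hz)
      have hab : (s + r + s * r)⁻¹ * s + (s + r + s * r)⁻¹ * ((1 + s) * r) = 1 := by
        field_simp
        ring
      have hM'' : IsChannel (fun X => ((s + r + s * r)⁻¹ * s) • Θ.apply M X
          + ((s + r + s * r)⁻¹ * ((1 + s) * r)) • M' X) :=
        hΘM.combo hM'chan (by positivity) (by positivity) hab
      have hmem : (s + r + s * r) ∈ RobSet (Θ.apply N) := by
        refine ⟨hs'0, _, hM'', ?_⟩
        have hfun : (fun X => (1 + (s + r + s * r))⁻¹ • (Θ.apply N X + (s + r + s * r) •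
              (((s + r + s * r)⁻¹ * s) • Θ.apply M X
                + ((s + r + s * r)⁻¹ * ((1 + s) * r)) • M' X)))
            = (fun X => (1 + r)⁻¹ •
                (Θ.apply (fun X => (1 + s)⁻¹ • (N X + s • M X)) X + r • M' X)) := by
          funext X
          rw [happly X]
          have h1s : (0 : ℝ) < 1 + s := by linarith
          have h1r : (0 : ℝ) < 1 + r := by linarith
          have h1s' : (0 : ℝ) < 1 + (s + r + s * r) := by linarith
          match_scalars <;> (field_simp; try ring) <;> tauto
        rw [hfun]
        exact hsep'
      have hle := genRob_le hmem
      nlinarith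
  -- epsilon argument
  show Real.logb 2 (1 + genRobustness (Θ.apply N))
      ≤ Real.logb 2 (1 + genRobustness N) + Real.logb 2 (1 + δ)
  refine le_of_forall_pos_le_add fun ε hε => ?_
  have h2e : (1 : ℝ) < (2 : ℝ) ^ (ε / 2) := by
    have h0 := (Real.rpow_lt_rpow_left_iff (x := 2) (y := 0) (z := ε / 2)
      (by norm_num)).mpr (by positivity)
    simpa [Real.rpow_zero] using h0
  set σ : ℝ := (2 : ℝ) ^ (ε / 2) - 1 with hσdef
  have hσpos : 0 < σ := by simp only [hσdef]; linarith
  have hσlog : Real.logb 2 (1 + σ) = ε / 2 := by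
    rw [hσdef, show (1 : ℝ) + ((2 : ℝ) ^ (ε / 2) - 1) = (2 : ℝ) ^ (ε / 2) by ring,
      Real.logb_rpow (by norm_num) (by norm_num)]
  obtain ⟨s, hsmem, hslt⟩ := exists_lt_of_csInf_lt hSN
    (show sInf (RobSet N) < genRobustness N + σ from lt_add_of_pos_right _ hσpos)
  have hs0 : 0 ≤ s := hsmem.1
  have hC := claim s hsmem σ hσpos
  have h1 : (0 : ℝ) < 1 + genRobustness (Θ.apply N) := by linarith
  have h2 : 1 + genRobustness (Θ.apply N) ≤ (1 + s) * (1 + δ + σ) := by linarith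
  have h3 : Real.logb 2 (1 + genRobustness (Θ.apply N))
      ≤ Real.logb 2 ((1 + s) * (1 + δ + σ)) :=
    Real.logb_le_logb_of_le (by norm_num) h1 h2
  have h4 : Real.logb 2 ((1 + s) * (1 + δ + σ))
      = Real.logb 2 (1 + s) + Real.logb 2 (1 + δ + σ) :=
    Real.logb_mul (by positivity) (by positivity)
  have h5 : Real.logb 2 (1 + s) ≤ Real.logb 2 ((1 + genRobustness N) * (1 + σ)) :=
    Real.logb_le_logb_of_le (by norm_num) (by linarith) (by nlinarith)
  have h6 : Real.logb 2 (1 + δ + σ) ≤ Real.logb 2 ((1 + δ) * (1 + σ)) :=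
    Real.logb_le_logb_of_le (by norm_num) (by linarith) (by nlinarith)
  have h7 : Real.logb 2 ((1 + genRobustness N) * (1 + σ))
      = Real.logb 2 (1 + genRobustness N) + Real.logb 2 (1 + σ) :=
    Real.logb_mul (by positivity) (by positivity)
  have h8 : Real.logb 2 ((1 + δ) * (1 + σ))
      = Real.logb 2 (1 + δ) + Real.logb 2 (1 + σ) :=
    Real.logb_mul (by positivity) (by positivity)
  linarith

end Statements

end DynEnt
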